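/- Suppose c : [κ]² → θ is a closed coloring, i.e., for all β < κ and i < θ the set {α < β : c(α,β) ≤ i} is closed below β (closed in the order topology on β). If c witnesses U(κ,2,θ,χ), then c witnesses U(κ,κ,θ,χ). -/

import Mathlib

open Cardinal Set

/-- A set (of a `Type 1`, such as sets of ordinals or families of such sets)
has cardinality exactly the (small) cardinal `κ`. -/
def cardEq {X : Type 1} (s : Set X) (κ : Cardinal.{0}) : Prop :=
  Cardinal.mk s = Cardinal.lift.{1} κ

/-- A set has cardinality at most `κ`. -/
def cardLE {X : Type 1} (s : Set X) (κ : Cardinal.{0}) : Prop :=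
  Cardinal.mk s ≤ Cardinal.lift.{1} κ

/-- A set has cardinality less than `κ`. -/
def cardLT {X : Type 1} (s : Set X) (κ : Cardinal.{0}) : Prop :=
  Cardinal.mk s < Cardinal.lift.{1} κ



/-- The set of ordinals `a` has order type (exactly) the ordinal `σ`. -/
def otpEq (a : Set Ordinal) (σ : Ordinal.{0}) : Prop :=
  Ordinal.type ((· < ·) : a → a → Prop) = Ordinal.lift.{1} σ

/-- `a < b` elementwise: every element of `a` is below every element of `b`. -/
def setBelow (a b : Set Ordinal) : Prop := ∀ x ∈ a, ∀ y ∈ b, x < y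

/-- `c[a × b] = {τ}`: the coloring `c` is constantly `τ` on `a × b`. -/
def constOn (c : Ordinal → Ordinal → Ordinal) (a b : Set Ordinal) (τ : Ordinal) : Prop :=
  Set.image2 c a b = {τ}

/-- `𝒜` is a `κ`-sized pairwise disjoint subfamily of `[κ]^σ`. -/
def KappaFam (κ : Cardinal.{0}) (σ : Ordinal) (𝒜 : Set (Set Ordinal)) : Prop :=
  (∀ a ∈ 𝒜, a ⊆ Set.Iio κ.ord ∧ otpEq a σ) ∧ 𝒜.PairwiseDisjoint id ∧ cardEq 𝒜 κ

/-- `c` witnesses `Pr₁(κ, κ, θ, χ)`. -/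
def IsPr1 (κ θ χ : Cardinal.{0}) (c : Ordinal → Ordinal → Ordinal) : Prop :=
  ∀ σ < χ.ord, ∀ 𝒜 : Set (Set Ordinal), KappaFam κ σ 𝒜 →
    ∀ ξ < θ.ord, ∃ a ∈ 𝒜, ∃ b ∈ 𝒜, setBelow a b ∧ constOn c a b ξ

/-- `Pr₁(κ, κ, θ, χ)`. -/
def Pr1 (κ θ χ : Cardinal.{0}) : Prop :=
  ∃ c : Ordinal → Ordinal → Ordinal,
    (∀ α β : Ordinal, α < β → β < κ.ord → c α β < θ.ord) ∧ IsPr1 κ θ χ c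

/-- `c` witnesses `U₁(κ, 2, θ, χ)`. -/
def IsU1 (κ θ χ : Cardinal.{0}) (c : Ordinal → Ordinal → Ordinal) : Prop :=
  ∀ σ < χ.ord, ∀ 𝒜 : Set (Set Ordinal), KappaFam κ σ 𝒜 →
    ∀ ε < θ.ord, ∃ a ∈ 𝒜, ∃ b ∈ 𝒜, setBelow a b ∧
      ∃ τ, ε < τ ∧ τ < θ.ord ∧ constOn c a b τ

/-- `U₁(κ, 2, θ, χ)`. -/
def U1 (κ θ χ : Cardinal.{0}) : Prop :=
  ∃ c : Ordinal → Ordinal → Ordinal,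
    (∀ α β : Ordinal, α < β → β < κ.ord → c α β < θ.ord) ∧ IsU1 κ θ χ c

/-- `c` witnesses `U(κ, μ, θ, χ)`. -/
def IsU (κ μ θ χ : Cardinal.{0}) (c : Ordinal → Ordinal → Ordinal) : Prop :=
  ∀ σ < χ.ord, ∀ 𝒜 : Set (Set Ordinal), KappaFam κ σ 𝒜 →
    ∀ τ < θ.ord, ∃ ℬ ⊆ 𝒜, cardEq ℬ μ ∧
      ∀ a ∈ ℬ, ∀ b ∈ ℬ, setBelow a b → ∀ z ∈ Set.image2 c a b, τ ≤ z

/-- `𝒜 ∈ 𝔸^κ_χ`: a pairwise disjoint family of `κ` many (nonempty) subsets of `κ`,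
with the supremum of the cardinalities of its members below `χ`. -/
def AFam (κ χ : Cardinal.{0}) (𝒜 : Set (Set Ordinal)) : Prop :=
  (∀ a ∈ 𝒜, a ⊆ Set.Iio κ.ord ∧ a.Nonempty) ∧ 𝒜.PairwiseDisjoint id ∧ cardEq 𝒜 κ ∧
    ∃ ν < χ, ∀ a ∈ 𝒜, cardLE a ν

/-- `T_c(𝒜)`: the set of `τ < θ` so that `c[a × b] = {τ}` for some `a < b` from `𝒜`. -/
def Tc (θ : Cardinal.{0}) (c : Ordinal → Ordinal → Ordinal) (𝒜 : Set (Set Ordinal)) :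
    Set Ordinal :=
  {τ | τ < θ.ord ∧ ∃ a ∈ 𝒜, ∃ b ∈ 𝒜, setBelow a b ∧ constOn c a b τ}

/-- The collection `F_{c,χ}` of subsets of `θ` containing some `T_c(𝒜)`, `𝒜 ∈ 𝔸^κ_χ`. -/
def Fc (κ θ χ : Cardinal.{0}) (c : Ordinal → Ordinal → Ordinal) : Set (Set Ordinal) :=
  {T | T ⊆ Set.Iio θ.ord ∧ ∃ 𝒜 : Set (Set Ordinal), AFam κ χ 𝒜 ∧ Tc θ c 𝒜 ⊆ T}

/-- `F` is a (proper) `χ`-complete filter on `θ`. -/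
def IsNiceFilter (θ χ : Cardinal.{0}) (F : Set (Set Ordinal)) : Prop :=
  (∀ T ∈ F, T ⊆ Set.Iio θ.ord) ∧ Set.Iio θ.ord ∈ F ∧ ∅ ∉ F ∧
    (∀ S ∈ F, ∀ T, S ⊆ T → T ⊆ Set.Iio θ.ord → T ∈ F) ∧
    (∀ I : Set (Set Ordinal), I ⊆ F → I.Nonempty → cardLT I χ → ⋂₀ I ∈ F)

/-- `F` is a `χ`-complete uniform filter on `θ`. -/
def IsUniformFilter (θ χ : Cardinal.{0}) (F : Set (Set Ordinal)) : Prop :=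
  IsNiceFilter θ χ F ∧ ∀ T ∈ F, cardEq T θ

/-- `X` is `F`-positive. -/
def FPos (F : Set (Set Ordinal)) (X : Set Ordinal) : Prop :=
  ∀ T ∈ F, (X ∩ T).Nonempty
namespace StmtAux
open scoped Classical

/-- sup of a small set of ordinals below `o` stays below `o`. -/
lemma supset {o : Ordinal.{0}} (ho : 0 < o) {s : Set Ordinal.{0}}
    (hs : ∀ x ∈ s, x < o) (hcard : #s < Cardinal.lift.{1} o.cof) : sSup s < o := by
  rcases s.eq_empty_or_nonempty with rfl | hne
  · simpa using ho
  · set e := Ordinal.ToType.mk (o := o) with he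
    set ι := {t : o.ToType // (e.symm t : Ordinal) ∈ s} with hι
    set f : ι → Ordinal.{0} := fun t => (e.symm t.1 : Ordinal) with hf
    have hqe : Cardinal.lift.{1} #ι = #s := by
      have : Nonempty (ι ≃ ↥s) := by
        refine ⟨{ toFun := fun t => ⟨(e.symm t.1 : Ordinal), t.2⟩,
                  invFun := fun x => ⟨e ⟨x.1, hs x.1 x.2⟩, by simpa using x.2⟩,
                  left_inv := ?_, right_inv := ?_ }⟩
        · intro t
          apply Subtype.ext
          exact e.apply_symm_apply t.1
        · intro x
          apply Subtype.ext
          simp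
      have := Cardinal.lift_mk_eq'.mpr this
      rwa [Cardinal.lift_id'] at this
    have hcard' : #ι < o.cof := by
      rw [← hqe] at hcard
      exact Cardinal.lift_lt.mp hcard
    have hsup : ⨆ i, f i < o := Ordinal.iSup_lt_of_lt_cof hcard' (fun i => (e.symm i.1).2)
    refine lt_of_le_of_lt (csSup_le hne ?_) hsup
    intro x hx
    have : x = f ⟨e ⟨x, hs x hx⟩, by simpa using hx⟩ := by simp [hf]
    rw [this]
    exact le_ciSup (Ordinal.bddAbove_range f) _

/-- cofinality of the sup of a strictly monotone cofinal family. -/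
lemma cof_of_mono_cofinal {o γ : Ordinal.{0}} (g : Ordinal → Ordinal)
    (hmono : ∀ ⦃j1 j2⦄, j1 < j2 → j2 < o → g j1 < g j2)
    (hlt : ∀ j < o, g j < γ) (hcov : ∀ x < γ, ∃ j < o, x < g j) :
    γ.cof = o.cof := by
  have hle : ∀ ⦃j1 j2⦄, j1 ≤ j2 → j2 < o → g j1 ≤ g j2 := by
    intro j1 j2 h h2
    rcases eq_or_lt_of_le h with rfl | h'
    · exact le_rfl
    · exact (hmono h' h2).le
  apply le_antisymm
  · obtain ⟨ι, f, hf, hcardf⟩ := Ordinal.exists_lsub_cof o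
    have hFlt : ∀ i, g (f i) < γ := fun i => hlt _ (hf ▸ Ordinal.lt_lsub f i)
    have hlsub : Ordinal.lsub (fun i => g (f i)) = γ := by
      refine le_antisymm (Ordinal.lsub_le hFlt) (le_of_not_gt fun hcon => ?_)
      obtain ⟨j, hj, hjg⟩ := hcov _ hcon
      have : j < Ordinal.lsub f := hf ▸ hj
      obtain ⟨i, hi⟩ := Ordinal.lt_lsub_iff.mp this
      have h1 : g j ≤ g (f i) := hle hi (hf ▸ Ordinal.lt_lsub f i)
      exact lt_irrefl _ ((hjg.trans_le h1).trans (Ordinal.lt_lsub (fun i => g (f i)) i))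
    calc γ.cof ≤ #ι := hlsub ▸ Ordinal.cof_lsub_le _
    _ = o.cof := hcardf
  · obtain ⟨ι, G, hG, hcardG⟩ := Ordinal.exists_lsub_cof γ
    have hGlt : ∀ i, G i < γ := fun i => hG ▸ Ordinal.lt_lsub G i
    have hch : ∀ i, ∃ j, j < o ∧ G i < g j := by
      intro i
      obtain ⟨j, hj, h⟩ := hcov _ (hGlt i)
      exact ⟨j, hj, h⟩
    choose F hFo hFlt using hch
    have hlsub : Ordinal.lsub F = o := by
      refine le_antisymm (Ordinal.lsub_le hFo) (le_of_not_gt fun hcon => ?_)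
      set j := Ordinal.lsub F with hj
      have hjo : j < o := hcon
      have : g j < γ := hlt _ hjo
      rw [← hG] at this
      obtain ⟨i, hi⟩ := Ordinal.lt_lsub_iff.mp this
      have h2 : g j < g (F i) := lt_of_le_of_lt hi (hFlt i)
      have h3 : j < F i := by
        by_contra hcc
        push_neg at hcc
        exact absurd (hle hcc hjo) (not_le.mpr h2)
      exact absurd (Ordinal.lt_lsub F i) (not_lt.mpr h3.le)
    calc o.cof ≤ #ι := hlsub ▸ Ordinal.cof_lsub_le _
    _ = γ.cof := hcardG

variable {α : Type*} [Inhabited α]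

/-- generic transfinite recursion choosing at each step a member of a set
determined by the earlier values. -/
noncomputable def orec (F : Ordinal.{0} → (Ordinal.{0} → α) → Set α) : Ordinal.{0} → α :=
  Ordinal.lt_wf.fix fun ζ rec =>
    if h : (F ζ (fun ζ' => if hh : ζ' < ζ then rec ζ' hh else default)).Nonempty then h.some
    else default

theorem orec_def (F : Ordinal.{0} → (Ordinal.{0} → α) → Set α) (ζ : Ordinal) :
    orec F ζ = (if h : (F ζ (fun ζ' => if _ : ζ' < ζ then orec F ζ' else default)).Nonempty
      then h.some else default) :=
  WellFounded.fix_eq _ _ _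

theorem orec_mem (F : Ordinal.{0} → (Ordinal.{0} → α) → Set α)
    (hF : ∀ ζ (f g : Ordinal → α), (∀ ζ' < ζ, f ζ' = g ζ') → F ζ f = F ζ g) (ζ : Ordinal)
    (hne : (F ζ (orec F)).Nonempty) : orec F ζ ∈ F ζ (orec F) := by
  have e : F ζ (fun ζ' => if _ : ζ' < ζ then orec F ζ' else default) = F ζ (orec F) :=
    hF ζ _ _ (fun ζ' h => by rw [dif_pos h])
  have hne' : (F ζ (fun ζ' => if _ : ζ' < ζ then orec F ζ' else default)).Nonempty := by
    rw [e]; exact hne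
  rw [orec_def, dif_pos hne']
  exact e ▸ hne'.some_mem

/-- order type of inserting a point below a set of ordinals. -/
theorem otpEq_insert {a : Set Ordinal.{0}} {σ : Ordinal.{0}}
    (h : Ordinal.type ((· < ·) : a → a → Prop) = Ordinal.lift.{1} σ) {δ : Ordinal}
    (hδ : ∀ x ∈ a, δ < x) :
    Ordinal.type ((· < ·) : ↥(insert δ a : Set Ordinal) → ↥(insert δ a : Set Ordinal) → Prop)
      = Ordinal.lift.{1} (1 + σ) := by
  have key : Nonempty
      ((Sum.Lex (@emptyRelation PUnit.{2}) ((· < ·) : a → a → Prop)) ≃r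
        ((· < ·) : ↥(insert δ a : Set Ordinal) → ↥(insert δ a : Set Ordinal) → Prop)) := by
    refine ⟨RelIso.mk (Equiv.mk
      (fun x => Sum.elim (fun _ => (⟨δ, Set.mem_insert _ _⟩ : ↥(insert δ a : Set Ordinal)))
        (fun y => ⟨y.1, Set.mem_insert_of_mem _ y.2⟩) x)
      (fun y => if h : y.1 = δ then Sum.inl PUnit.unit
        else Sum.inr ⟨y.1, y.2.resolve_left h⟩) ?_ ?_) ?_⟩
    · rintro (u | x)
      · simp
      · have : x.1 ≠ δ := (hδ x.1 x.2).ne'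
        simp only [Sum.elim_inr, this, dif_neg, not_false_iff]
        exact dif_neg this
    · rintro ⟨y, hy⟩
      by_cases hyd : y = δ
      · subst hyd; simp
      · simp only [hyd, dif_neg, not_false_iff, Sum.elim_inr]
    · rintro (u | x) (v | y)
      · simp only [Equiv.coe_fn_mk, Sum.elim_inl, Sum.lex_inl_inl, empty_relation_apply,
          iff_false, Subtype.mk_lt_mk]
        exact lt_irrefl δ
      · simp only [Equiv.coe_fn_mk, Sum.elim_inl, Sum.elim_inr, Subtype.mk_lt_mk]
        exact ⟨fun _ => Sum.Lex.sep _ _, fun _ => hδ y.1 y.2⟩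
      · simp only [Equiv.coe_fn_mk, Sum.elim_inl, Sum.elim_inr, Sum.lex_inr_inl,
          iff_false, Subtype.mk_lt_mk]
        intro hh
        exact absurd (hh.trans (hδ x.1 x.2)) (lt_irrefl _)
      · simp only [Equiv.coe_fn_mk, Sum.elim_inr, Sum.lex_inr_inr, Subtype.mk_lt_mk,
          Subtype.coe_lt_coe]
  have e1 : Ordinal.type (@emptyRelation PUnit.{2}) = 1 := by
    rw [Ordinal.type_eq_one_iff_unique]
    exact ⟨inferInstance⟩
  calc Ordinal.type ((· < ·) : ↥(insert δ a : Set Ordinal) → ↥(insert δ a : Set Ordinal) → Prop)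
      = Ordinal.type (Sum.Lex (@emptyRelation PUnit.{2}) ((· < ·) : a → a → Prop)) :=
        (Ordinal.type_eq.mpr key).symm
    _ = 1 + Ordinal.lift.{1} σ := by rw [Ordinal.type_sum_lex, e1, h]
    _ = Ordinal.lift.{1} (1 + σ) := by rw [Ordinal.lift_add, Ordinal.lift_one]

end StmtAux

open StmtAux

/-- If `c` is a closed coloring witnessing `U(κ,2,θ,χ)`,
then `c` witnesses `U(κ,κ,θ,χ)`. -/
theorem stmt10 (κ θ χ : Cardinal) (hκ : κ.IsRegular) (hκω : Cardinal.aleph 0 < κ)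
    (hχ : χ.IsRegular) (hχκ : χ < κ) (hθκ : θ ≤ κ)
    (c : Ordinal → Ordinal → Ordinal)
    (hrange : ∀ α β : Ordinal, α < β → β < κ.ord → c α β < θ.ord)
    (hclosed : ∀ β < κ.ord, ∀ i < θ.ord, ∀ δ ≤ β, 0 < δ →
      sSup (({α | α < β ∧ c α β ≤ i} ∪ {β}) ∩ Set.Iio δ) = δ →
      δ ∈ {α | α < β ∧ c α β ≤ i} ∪ {β})
    (hU : IsU κ 2 θ χ c) :
    IsU κ κ θ χ c := by
  classical
  intro σ hσχ 𝒜 hfam τ hτθ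
  obtain ⟨hmem, hdisj, hcard⟩ := hfam
  have hκℵ : ℵ₀ ≤ κ := hκ.aleph0_le
  have hκlift : ℵ₀ ≤ Cardinal.lift.{1} κ := Cardinal.aleph0_le_lift.mpr hκℵ
  have Klim : Order.IsSuccLimit κ.ord := Cardinal.isSuccLimit_ord hκℵ
  have hK0 : (0 : Ordinal) < κ.ord := Klim.pos
  have hcofK : κ.ord.cof = κ := hκ.cof_eq
  have hsucclt : ∀ x : Ordinal, x < κ.ord → x + 1 < κ.ord := by
    intro x hx
    rw [Ordinal.add_one_eq_succ]
    exact Klim.succ_lt hx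
  -- trivial case τ = 0
  rcases eq_or_ne τ 0 with rfl | hτ0
  · exact ⟨𝒜, subset_rfl, hcard, fun a _ b _ _ z _ => (zero_le : 0 ≤ z)⟩
  -- choose i with i + 1 < θ.ord and (i < z → τ ≤ z)
  obtain ⟨i, hi1, hi2⟩ : ∃ i : Ordinal, i + 1 < θ.ord ∧ ∀ z, i < z → τ ≤ z := by
    rcases Ordinal.zero_or_succ_or_isSuccLimit τ with h0 | ⟨a, ha⟩ | hlim
    · exact absurd h0 hτ0
    · refine ⟨a, ?_, ?_⟩
      · rw [Ordinal.add_one_eq_succ, ha]; exact hτθ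
      · intro z hz; rw [← ha]; exact Order.succ_le_of_lt hz
    · have hω : Ordinal.omega0 ≤ τ := Ordinal.omega0_le_of_isSuccLimit hlim
      have hθℵ : ℵ₀ ≤ θ := by
        rw [← Cardinal.ord_le_ord, Cardinal.ord_aleph0]
        exact hω.trans hτθ.le
      refine ⟨τ, ?_, fun z hz => hz.le⟩
      rw [Ordinal.add_one_eq_succ]
      exact (Cardinal.isSuccLimit_ord hθℵ).succ_lt hτθ
  have hii1 : i < i + 1 := by
    rw [Ordinal.add_one_eq_succ]; exact Order.lt_succ i
  have hiθ : i < θ.ord := hii1.trans hi1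
  -- basic facts about 𝒜
  have hσcard : σ.card < χ := Cardinal.lt_ord.mp hσχ
  have hχℵ : ℵ₀ ≤ χ := hχ.aleph0_le
  have hσκ : σ.card < κ := hσcard.trans hχκ
  have hσ0 : σ ≠ 0 := by
    intro h0
    subst h0
    have hsub : 𝒜 ⊆ {(∅ : Set Ordinal)} := by
      intro a ha
      have h := (hmem a ha).2
      rw [otpEq, show Ordinal.lift.{1,0} 0 = 0 from Ordinal.lift_zero, Ordinal.type_eq_zero_iff_isEmpty] at h
      exact Set.isEmpty_coe_sort.mp h
    have h1 : #𝒜 ≤ 1 := by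
      calc #𝒜 ≤ #({(∅ : Set Ordinal)} : Set (Set Ordinal)) := Cardinal.mk_le_mk_of_subset hsub
        _ = 1 := Cardinal.mk_singleton _
    rw [hcard] at h1
    exact absurd (hκlift.trans h1) (by simp [Cardinal.one_lt_aleph0.not_ge])
  have hane : ∀ a ∈ 𝒜, a.Nonempty := by
    intro a ha
    rw [Set.nonempty_iff_ne_empty]
    intro hae
    have h := (hmem a ha).2
    rw [otpEq, hae] at h
    have : Ordinal.lift.{1} σ = 0 := by
      rw [← h, Ordinal.type_eq_zero_iff_isEmpty]
      exact Set.isEmpty_coe_sort.mpr rfl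
    have h2 : Ordinal.lift.{1,0} σ = Ordinal.lift.{1,0} 0 := by
      rw [this]; simp
    exact hσ0 (Ordinal.lift_inj.mp h2)
  have hacard : ∀ a ∈ 𝒜, #a = Cardinal.lift.{1} σ.card := by
    intro a ha
    have h := (hmem a ha).2
    rw [otpEq] at h
    have := congrArg Ordinal.card h
    rw [Ordinal.card_type, ← Ordinal.lift_card] at this
    exact this
  have hasup : ∀ a ∈ 𝒜, sSup a < κ.ord := by
    intro a ha
    refine supset hK0 (fun x hx => (hmem a ha).1 hx) ?_
    rw [hacard a ha, hcofK]
    exact Cardinal.lift_lt.mpr hσκ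
  -- there are members of 𝒜 entirely above any bound
  have habove : ∀ b, b < κ.ord → ∃ a ∈ 𝒜, ∀ x ∈ a, b < x := by
    intro b hb
    by_contra hcon
    push_neg at hcon
    have hch : ∀ a : ↥𝒜, ∃ x, x ∈ a.1 ∧ x ≤ b := by
      intro a
      obtain ⟨x, hx1, hx2⟩ := hcon a.1 a.2
      exact ⟨x, hx1, hx2⟩
    choose w hw1 hw2 using hch
    have hinj : Function.Injective (fun a : ↥𝒜 => (⟨w a, hw2 a⟩ : ↥(Set.Iic b))) := by
      intro a1 a2 he
      have hww : w a1 = w a2 := congrArg Subtype.val he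
      by_contra hne
      have hne' : a1.1 ≠ a2.1 := fun h => hne (Subtype.ext h)
      have hdis := hdisj a1.2 a2.2 hne'
      exact Set.disjoint_left.mp hdis (hw1 a1) (hww ▸ hw1 a2)
    have hIic : #(Set.Iic b) = Cardinal.lift.{1} (b + 1).card := by
      have : Set.Iic b = Set.Iio (b + 1) := by
        ext x
        simp [Order.lt_add_one_iff]
      rw [this, Ordinal.mk_Iio_ordinal]
    have hle : Cardinal.lift.{1} κ ≤ Cardinal.lift.{1} (b + 1).card := by
      rw [← hcard, ← hIic]
      exact Cardinal.mk_le_of_injective hinj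
    have hlt : (b + 1).card < κ := Cardinal.lt_ord.mp (hsucclt b hb)
    exact absurd hle (not_le.mpr (Cardinal.lift_lt.mpr hlt))
  -- 1 + σ is small
  have h1σ : 1 + σ < χ.ord := by
    rw [Cardinal.lt_ord, Ordinal.card_add, Ordinal.card_one]
    rcases lt_or_ge σ.card ℵ₀ with hfin | hinf
    · exact lt_of_lt_of_le (Cardinal.add_lt_aleph0 Cardinal.one_lt_aleph0 hfin) hχℵ
    · rw [Cardinal.add_eq_right hinf (Cardinal.one_lt_aleph0.le.trans hinf)]
      exact hσcard
  -- the family of "good" sets above δ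
  set Good : Ordinal → Set (Set Ordinal) :=
    fun δ => {a | a ∈ 𝒜 ∧ (∀ x ∈ a, δ < x) ∧ ∀ β ∈ a, i < c δ β} with hGoodDef
  -- Claim A : beyond some point all δ have a good set
  have claimA : ∃ ds, ds < κ.ord ∧ ∀ δ, ds < δ → δ < κ.ord → (Good δ).Nonempty := by
    by_contra hA
    push_neg at hA
    -- recursion producing stuck ordinals with 𝒜-sets above them
    set F1 : Ordinal.{0} → (Ordinal → Ordinal × Set Ordinal) → Set (Ordinal × Set Ordinal) :=
      fun ζ prev => {p | sSup ((fun ζ' => sSup (insert (prev ζ').1 (prev ζ').2) + 1) '' Set.Iio ζ)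
          < p.1 ∧ p.1 < κ.ord ∧ Good p.1 = ∅ ∧ p.2 ∈ 𝒜 ∧ ∀ x ∈ p.2, p.1 < x} with hF1def
    have hF1 : ∀ ζ (f g : Ordinal → Ordinal × Set Ordinal),
        (∀ ζ' < ζ, f ζ' = g ζ') → F1 ζ f = F1 ζ g := by
      intro ζ f g hfg
      have : ((fun ζ' => sSup (insert (f ζ').1 (f ζ').2) + 1) '' Set.Iio ζ)
          = ((fun ζ' => sSup (insert (g ζ').1 (g ζ').2) + 1) '' Set.Iio ζ) :=
        Set.image_congr (fun x hx => by rw [hfg x hx])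
      rw [hF1def]
      simp only [this]
    set u : Ordinal → Ordinal × Set Ordinal := orec F1 with hudef
    have valid : ∀ ζ, ζ < κ.ord → u ζ ∈ F1 ζ u := by
      intro ζ
      induction ζ using Ordinal.induction with
      | _ ζ IH =>
        intro hζK
        apply orec_mem F1 hF1
        have hins : ∀ ζ', ζ' < ζ → sSup (insert (u ζ').1 (u ζ').2) + 1 < κ.ord := by
          intro ζ' hζ'
          have hv := IH ζ' hζ' (hζ'.trans hζK)
          apply hsucclt
          apply supset hK0
          · intro x hx
            rcases hx with rfl | hx
            · exact hv.2.1
            · exact (hmem _ hv.2.2.2.1).1 hx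
          · refine lt_of_le_of_lt Cardinal.mk_insert_le ?_
            rw [hacard _ hv.2.2.2.1, hcofK]
            exact Cardinal.add_lt_of_lt hκlift (Cardinal.lift_lt.mpr hσκ)
              (Cardinal.one_lt_aleph0.trans_le hκlift)
        have hpb : sSup ((fun ζ' => sSup (insert (u ζ').1 (u ζ').2) + 1) '' Set.Iio ζ)
            < κ.ord := by
          apply supset hK0
          · rintro y ⟨ζ', hζ', rfl⟩
            exact hins ζ' hζ'
          · refine lt_of_le_of_lt Cardinal.mk_image_le ?_
            rw [Ordinal.mk_Iio_ordinal, hcofK]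
            exact Cardinal.lift_lt.mpr (Cardinal.lt_ord.mp hζK)
        obtain ⟨δ, hδpb, hδK, hδstuck⟩ := hA _ hpb
        obtain ⟨a, ha𝒜, hax⟩ := habove δ hδK
        exact ⟨(δ, a), hδpb, hδK, hδstuck, ha𝒜, hax⟩
    -- separation of the augmented sets
    have husub : ∀ ζ, ζ < κ.ord → ∀ x ∈ insert (u ζ).1 (u ζ).2, x < κ.ord := by
      intro ζ hζ x hx
      rcases hx with rfl | hx
      · exact (valid ζ hζ).2.1
      · exact (hmem _ (valid ζ hζ).2.2.2.1).1 hx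
    have husep : ∀ ζ' ζ, ζ' < ζ → ζ < κ.ord → ∀ x ∈ insert (u ζ').1 (u ζ').2, x < (u ζ).1 := by
      intro ζ' ζ hζ'ζ hζK x hx
      have hv := valid ζ hζK
      have h1 : x ≤ sSup (insert (u ζ').1 (u ζ').2) :=
        le_csSup ⟨κ.ord, fun y hy => (husub ζ' (hζ'ζ.trans hζK) y hy).le⟩ hx
      have h2 : sSup (insert (u ζ').1 (u ζ').2) + 1
          ≤ sSup ((fun ζ'' => sSup (insert (u ζ'').1 (u ζ'').2) + 1) '' Set.Iio ζ) := by
        apply le_csSup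
        · refine ⟨κ.ord, ?_⟩
          rintro y ⟨ζ'', hζ'', rfl⟩
          have hvv := valid ζ'' (hζ''.trans hζK)
          apply le_of_lt
          apply hsucclt
          apply supset hK0 (husub ζ'' (hζ''.trans hζK))
          refine lt_of_le_of_lt Cardinal.mk_insert_le ?_
          rw [hacard _ hvv.2.2.2.1, hcofK]
          exact Cardinal.add_lt_of_lt hκlift (Cardinal.lift_lt.mpr hσκ)
            (Cardinal.one_lt_aleph0.trans_le hκlift)
        · exact ⟨ζ', hζ'ζ, rfl⟩
      calc x ≤ sSup (insert (u ζ').1 (u ζ').2) := h1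
        _ < sSup (insert (u ζ').1 (u ζ').2) + 1 := by
            rw [Ordinal.add_one_eq_succ]; exact Order.lt_succ _
        _ ≤ _ := h2
        _ < (u ζ).1 := hv.1
    -- the contradiction family
    set w : Ordinal → Set Ordinal := fun ζ => insert (u ζ).1 (u ζ).2 with hwdef
    have hwsep : ∀ ζ' ζ, ζ' < ζ → ζ < κ.ord → setBelow (w ζ') (w ζ) := by
      intro ζ' ζ h1 h2 x hx y hy
      have hxlt : x < (u ζ).1 := husep ζ' ζ h1 h2 x hx
      rcases hy with rfl | hy
      · exact hxlt
      · exact hxlt.trans ((valid ζ h2).2.2.2.2 y hy)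
    have hwne : ∀ ζ, ((u ζ).1 : Ordinal) ∈ w ζ := fun ζ => Set.mem_insert _ _
    set 𝒰 : Set (Set Ordinal) := w '' Set.Iio κ.ord with h𝒰def
    have h𝒰fam : KappaFam κ (1 + σ) 𝒰 := by
      refine ⟨?_, ?_, ?_⟩
      · rintro t ⟨ζ, hζ, rfl⟩
        constructor
        · intro x hx; exact husub ζ hζ x hx
        · have h := (hmem _ (valid ζ hζ).2.2.2.1).2
          rw [otpEq] at h ⊢
          exact otpEq_insert h (valid ζ hζ).2.2.2.2
      · rintro t1 ⟨ζ1, hζ1, rfl⟩ t2 ⟨ζ2, hζ2, rfl⟩ hne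
        have key : ∀ ξ1 ξ2, ξ1 < ξ2 → ξ2 < κ.ord → Disjoint (id (w ξ1)) (id (w ξ2)) := by
          intro ξ1 ξ2 hlt hK
          simp only [id]
          rw [Set.disjoint_left]
          intro x hx1 hx2
          have h1 := hwsep ξ1 ξ2 hlt hK x hx1 x hx2
          exact lt_irrefl x h1
        rcases lt_trichotomy ζ1 ζ2 with h | h | h
        · exact key ζ1 ζ2 h hζ2
        · exact absurd (congrArg w h) hne
        · exact (key ζ2 ζ1 h hζ1).symm
      · rw [cardEq]
        have : Set.InjOn w (Set.Iio κ.ord) := by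
          intro ζ1 hζ1 ζ2 hζ2 heq
          by_contra hne
          rcases lt_or_gt_of_ne hne with h | h
          · have := hwsep ζ1 ζ2 h hζ2 _ (hwne ζ1) _ (heq ▸ hwne ζ1)
            exact lt_irrefl _ this
          · have := hwsep ζ2 ζ1 h hζ1 _ (hwne ζ2) _ (heq.symm ▸ hwne ζ2)
            exact lt_irrefl _ this
        rw [Cardinal.mk_image_eq_of_injOn w _ this, Ordinal.mk_Iio_ordinal, Cardinal.card_ord]
    obtain ⟨B2, hB2A, hB2c, hB2g⟩ := hU (1 + σ) h1σ 𝒰 h𝒰fam (i + 1) hi1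
    have hB2nt : B2.Nontrivial := by
      rw [← Set.nontrivial_coe_sort]
      rw [← Cardinal.one_lt_iff_nontrivial]
      rw [cardEq] at hB2c
      rw [hB2c]
      have : Cardinal.lift.{1} (2 : Cardinal.{0}) = 2 := by simp
      rw [this]
      exact one_lt_two
    obtain ⟨x, hx, y, hy, hxy⟩ := hB2nt
    obtain ⟨ζ1, hζ1, hx1⟩ := hB2A hx
    obtain ⟨ζ2, hζ2, hy2⟩ := hB2A hy
    have key : ∀ ξ1 ξ2, ξ1 < ξ2 → ξ2 < κ.ord → w ξ1 ∈ B2 → w ξ2 ∈ B2 → False := by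
      intro ξ1 ξ2 hlt hK hm1 hm2
      have hsb : setBelow (w ξ1) (w ξ2) := hwsep ξ1 ξ2 hlt hK
      -- a bad pair exists since (u ξ1).1 is stuck
      have hstuck : Good (u ξ1).1 = ∅ := (valid ξ1 (hlt.trans hK)).2.2.1
      have hnotgood : ¬ ∀ β ∈ (u ξ2).2, i < c (u ξ1).1 β := by
        intro hgood
        have : (u ξ2).2 ∈ Good (u ξ1).1 := by
          refine ⟨(valid ξ2 hK).2.2.2.1, ?_, hgood⟩
          intro x' hx'
          exact hwsep ξ1 ξ2 hlt hK _ (hwne ξ1) x' (Set.mem_insert_of_mem _ hx')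
        rw [hstuck] at this
        exact this
      push_neg at hnotgood
      obtain ⟨β, hβ, hbad⟩ := hnotgood
      have hz : c (u ξ1).1 β ∈ Set.image2 c (w ξ1) (w ξ2) :=
        Set.mem_image2_of_mem (hwne ξ1) (Set.mem_insert_of_mem _ hβ)
      have := hB2g _ hm1 _ hm2 hsb _ hz
      exact absurd (hii1.trans_le (this.trans hbad)) (lt_irrefl i)
    have hζne : ζ1 ≠ ζ2 := by
      intro h
      exact hxy (hx1 ▸ hy2 ▸ (congrArg w h) ▸ rfl)
    rcases lt_or_gt_of_ne hζne with h | h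
    · exact key ζ1 ζ2 h hζ2 (hx1 ▸ hx) (hy2 ▸ hy)
    · exact key ζ2 ζ1 h hζ1 (hy2 ▸ hy) (hx1 ▸ hx)
  obtain ⟨ds, hdsK, hGood⟩ := claimA
  -- main recursion
  set F2 : Ordinal.{0} → (Ordinal → Set Ordinal) → Set (Set Ordinal) :=
    fun ξ prev => Good (max (ds + 1) (sSup ((fun ζ => sSup (prev ζ) + 1) '' Set.Iio ξ)))
    with hF2def
  have hF2 : ∀ ξ (f g : Ordinal → Set Ordinal), (∀ ζ < ξ, f ζ = g ζ) → F2 ξ f = F2 ξ g := by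
    intro ξ f g hfg
    have : ((fun ζ => sSup (f ζ) + 1) '' Set.Iio ξ) = ((fun ζ => sSup (g ζ) + 1) '' Set.Iio ξ) :=
      Set.image_congr (fun x hx => by rw [hfg x hx])
    rw [hF2def]
    simp only [this]
  set v : Ordinal → Set Ordinal := orec F2 with hvdef
  set D : Ordinal → Ordinal :=
    fun ξ => max (ds + 1) (sSup ((fun ζ => sSup (v ζ) + 1) '' Set.Iio ξ)) with hDdef
  have hdsD : ∀ ξ, ds < D ξ := by
    intro ξ
    refine lt_of_lt_of_le ?_ (le_max_left _ _)
    rw [Ordinal.add_one_eq_succ]; exact Order.lt_succ ds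
  have hD0 : ∀ ξ, 0 < D ξ := fun ξ => (zero_le : 0 ≤ ds).trans_lt (hdsD ξ)
  have valid2 : ∀ ξ, ξ < κ.ord → v ξ ∈ Good (D ξ) ∧ D ξ < κ.ord := by
    intro ξ
    induction ξ using Ordinal.induction with
    | _ ξ IH =>
      intro hξK
      have hDK : D ξ < κ.ord := by
        rw [hDdef]
        apply max_lt (hsucclt ds hdsK)
        apply supset hK0
        · rintro y ⟨ζ, hζ, rfl⟩
          apply hsucclt
          have hv𝒜 : v ζ ∈ 𝒜 := ((IH ζ hζ (hζ.trans hξK)).1).1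
          exact hasup _ hv𝒜
        · refine lt_of_le_of_lt Cardinal.mk_image_le ?_
          rw [Ordinal.mk_Iio_ordinal, hcofK]
          exact Cardinal.lift_lt.mpr (Cardinal.lt_ord.mp hξK)
      refine ⟨?_, hDK⟩
      exact orec_mem F2 hF2 ξ (hGood (D ξ) (hdsD ξ) hDK)
  have hv𝒜 : ∀ ξ, ξ < κ.ord → v ξ ∈ 𝒜 := fun ξ hξ => ((valid2 ξ hξ).1).1
  have hvD : ∀ ξ, ξ < κ.ord → ∀ x ∈ v ξ, D ξ < x := fun ξ hξ => ((valid2 ξ hξ).1).2.1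
  have hvc : ∀ ξ, ξ < κ.ord → ∀ β ∈ v ξ, i < c (D ξ) β := fun ξ hξ => ((valid2 ξ hξ).1).2.2
  have hDK : ∀ ξ, ξ < κ.ord → D ξ < κ.ord := fun ξ hξ => (valid2 ξ hξ).2
  have hvK : ∀ ξ, ξ < κ.ord → ∀ x ∈ v ξ, x < κ.ord := by
    intro ξ hξ x hx
    exact (hmem _ (hv𝒜 ξ hξ)).1 hx
  have hvsup : ∀ ξ, ξ < κ.ord → sSup (v ξ) < κ.ord := fun ξ hξ => hasup _ (hv𝒜 ξ hξ)
  have hkey : ∀ ζ ξ, ζ < ξ → ξ < κ.ord → sSup (v ζ) + 1 ≤ D ξ := by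
    intro ζ ξ hζξ hξK
    have hmemim : sSup (v ζ) + 1 ∈ ((fun ζ' => sSup (v ζ') + 1) '' Set.Iio ξ) := ⟨ζ, hζξ, rfl⟩
    have hbdd : BddAbove ((fun ζ' => sSup (v ζ') + 1) '' Set.Iio ξ) := by
      refine ⟨κ.ord, ?_⟩
      rintro y ⟨ζ', hζ', rfl⟩
      exact (hsucclt _ (hvsup ζ' (hζ'.trans hξK))).le
    exact le_trans (le_csSup hbdd hmemim) (le_max_right _ _)
  have hsupmem : ∀ ξ, ξ < κ.ord → ∀ x ∈ v ξ, x ≤ sSup (v ξ) := by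
    intro ξ hξ x hx
    exact le_csSup ⟨κ.ord, fun y hy => (hvK ξ hξ y hy).le⟩ hx
  have hsep2 : ∀ ζ ξ, ζ < ξ → ξ < κ.ord → ∀ x ∈ v ζ, ∀ y ∈ v ξ, x < y := by
    intro ζ ξ hζξ hξK x hx y hy
    have h1 : x ≤ sSup (v ζ) := hsupmem ζ (hζξ.trans hξK) x hx
    have h2 : sSup (v ζ) < D ξ := by
      refine lt_of_lt_of_le ?_ (hkey ζ ξ hζξ hξK)
      rw [Ordinal.add_one_eq_succ]; exact Order.lt_succ _
    exact lt_of_le_of_lt h1 (h2.trans (hvD ξ hξK y hy))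
  have hvltD : ∀ ζ ξ, ζ < ξ → ξ < κ.ord → ∀ x ∈ v ζ, x < D ξ := by
    intro ζ ξ hζξ hξK x hx
    refine lt_of_le_of_lt (hsupmem ζ (hζξ.trans hξK) x hx) ?_
    refine lt_of_lt_of_le ?_ (hkey ζ ξ hζξ hξK)
    rw [Ordinal.add_one_eq_succ]; exact Order.lt_succ _
  have hvne : ∀ ξ, ξ < κ.ord → (v ξ).Nonempty := fun ξ hξ => hane _ (hv𝒜 ξ hξ)
  have hDlt : ∀ ζ ξ, ζ < ξ → ξ < κ.ord → D ζ < D ξ := by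
    intro ζ ξ hζξ hξK
    obtain ⟨x, hx⟩ := hvne ζ (hζξ.trans hξK)
    exact (hvD ζ (hζξ.trans hξK) x hx).trans (hvltD ζ ξ hζξ hξK x hx)
  have hDle : ∀ ζ ξ, ζ ≤ ξ → ξ < κ.ord → D ζ ≤ D ξ := by
    intro ζ ξ h hξK
    rcases eq_or_lt_of_le h with rfl | h'
    · exact le_rfl
    · exact (hDlt ζ ξ h' hξK).le
  have hDcov : ∀ ξ, ξ < κ.ord → Order.IsSuccLimit ξ → ∀ y, y < D ξ → ∃ ζ, ζ < ξ ∧ y < D ζ := by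
    intro ξ hξK hξlim y hy
    rw [hDdef, lt_max_iff] at hy
    rcases hy with hy | hy
    · refine ⟨0, hξlim.pos, ?_⟩
      exact lt_of_lt_of_le hy (le_max_left _ _)
    · have : ∃ m ∈ ((fun ζ => sSup (v ζ) + 1) '' Set.Iio ξ), y < m := by
        by_contra hcc
        push_neg at hcc
        exact absurd (csSup_le' hcc) (not_le.mpr hy)
      obtain ⟨m, ⟨ζ, hζξ, rfl⟩, hym⟩ := this
      have hζ1 : ζ + 1 < ξ := by
        rw [Ordinal.add_one_eq_succ]; exact hξlim.succ_lt hζξ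
      refine ⟨ζ + 1, hζ1, ?_⟩
      exact lt_of_lt_of_le hym (hkey ζ (ζ + 1) (by
        rw [Ordinal.add_one_eq_succ]; exact Order.lt_succ ζ) (hζ1.trans hξK))
  -- the auxiliary regular cardinal ϖ
  obtain ⟨ϖ, hϖreg, hνϖ, hϖκ⟩ : ∃ ϖ, ϖ.IsRegular ∧ σ.card < ϖ ∧ ϖ < κ := by
    rcases lt_or_ge σ.card ℵ₀ with h | h
    · refine ⟨ℵ₀, Cardinal.isRegular_aleph0, h, ?_⟩
      rw [← Cardinal.aleph_zero]; exact hκω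
    · exact ⟨Order.succ σ.card, Cardinal.isRegular_succ h, Order.lt_succ _,
        lt_of_le_of_lt (Order.succ_le_of_lt hσcard) hχκ⟩
  have hϖℵ : ℵ₀ ≤ ϖ := hϖreg.aleph0_le
  -- tail-goodness at points of cofinality ϖ
  have hTail : ∀ ξ, ξ < κ.ord → ξ.cof = ϖ → ∃ ζ0, ζ0 < ξ ∧
      ∀ ζ, ζ0 ≤ ζ → ζ < ξ → ∀ α ∈ v ζ, ∀ β ∈ v ξ, i < c α β := by
    intro ξ hξK hξcof
    have hξlim : Order.IsSuccLimit ξ := Ordinal.aleph0_le_cof.mp (hξcof ▸ hϖℵ)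
    have hδcof : (D ξ).cof = ϖ := by
      rw [← hξcof]
      refine cof_of_mono_cofinal D (fun j1 j2 h hj => hDlt j1 j2 h (hj.trans hξK))
        (fun j hj => hDlt j ξ hj hξK) ?_
      intro x hx
      obtain ⟨ζ, h1, h2⟩ := hDcov ξ hξK hξlim x hx
      exact ⟨ζ, h1, h2⟩
    set eβ : Ordinal → Ordinal :=
      fun β => sSup (({α | α < β ∧ c α β ≤ i} ∪ {β}) ∩ Set.Iio (D ξ)) with heβdef
    have heβle : ∀ β, eβ β ≤ D ξ := by
      intro β
      exact csSup_le' (fun x hx => hx.2.le)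
    have heβ : ∀ β ∈ v ξ, eβ β < D ξ := by
      intro β hβ
      rcases lt_or_eq_of_le (heβle β) with h | h
      · exact h
      · exfalso
        have hβK : β < κ.ord := hvK ξ hξK β hβ
        have := hclosed β hβK i hiθ (D ξ) (hvD ξ hξK β hβ).le (hD0 ξ) h
        rcases this with hc1 | hc2
        · exact absurd hc1.2 (not_le.mpr (hvc ξ hξK β hβ))
        · exact absurd (hc2 ▸ hvD ξ hξK β hβ) (lt_irrefl _)
    set E := sSup (eβ '' v ξ) with hEdef
    have hE : E < D ξ := by
      apply supset (hD0 ξ)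
      · rintro y ⟨β, hβ, rfl⟩
        exact heβ β hβ
      · refine lt_of_le_of_lt Cardinal.mk_image_le ?_
        rw [hacard _ (hv𝒜 ξ hξK), hδcof]
        exact Cardinal.lift_lt.mpr hνϖ
    obtain ⟨ζ0, hζ0ξ, hζ0⟩ := hDcov ξ hξK hξlim E hE
    refine ⟨ζ0, hζ0ξ, ?_⟩
    intro ζ hζ0ζ hζξ α hα β hβ
    have hαβ : α < β := hsep2 ζ ξ hζξ hξK α hα β hβ
    by_contra hcc
    push_neg at hcc
    have hαD : α < D ξ := hvltD ζ ξ hζξ hξK α hα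
    have hαmem : α ∈ (({α' | α' < β ∧ c α' β ≤ i} ∪ {β}) ∩ Set.Iio (D ξ)) :=
      ⟨Or.inl ⟨hαβ, hcc⟩, hαD⟩
    have h1 : α ≤ eβ β := le_csSup ⟨D ξ, fun x hx => hx.2.le⟩ hαmem
    have h2 : eβ β ≤ E := le_csSup ⟨D ξ, by rintro y ⟨β', hβ', rfl⟩; exact (heβ β' hβ').le⟩
      (Set.mem_image_of_mem eβ hβ)
    have h3 : E < D ζ0 := hζ0
    have h4 : D ζ0 ≤ D ζ := hDle ζ0 ζ hζ0ζ (hζξ.trans hξK)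
    have h5 : D ζ < α := hvD ζ (hζξ.trans hξK) α hα
    exact absurd ((h1.trans h2).trans_lt (((h3.trans_le h4).trans h5))) (lt_irrefl α)
  -- pick the tail bounds
  set εf : Ordinal → Ordinal := fun ξ =>
    if h : ξ < κ.ord ∧ ξ.cof = ϖ then (hTail ξ h.1 h.2).choose else 0 with hεfdef
  have hεf : ∀ ξ (h : ξ < κ.ord ∧ ξ.cof = ϖ), εf ξ < ξ ∧
      ∀ ζ, εf ξ ≤ ζ → ζ < ξ → ∀ α ∈ v ζ, ∀ β ∈ v ξ, i < c α β := by
    intro ξ h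
    rw [hεfdef]
    simp only [dif_pos h]
    exact (hTail ξ h.1 h.2).choose_spec
  -- Fodor-type argument: some bound B works for κ-many indices
  set X : Ordinal → Set Ordinal :=
    fun B => {ξ | (ξ < κ.ord ∧ ξ.cof = ϖ) ∧ εf ξ ≤ B} with hXdef
  have hXB : ∃ B, B < κ.ord ∧ #(X B) = Cardinal.lift.{1} κ := by
    by_contra hB
    push_neg at hB
    have hXless : ∀ B, B < κ.ord → #(X B) < Cardinal.lift.{1} κ := by
      intro B hBK
      refine lt_of_le_of_ne ?_ (hB B hBK)
      have : X B ⊆ Set.Iio κ.ord := fun ξ hξ => hξ.1.1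
      calc #(X B) ≤ #(Set.Iio κ.ord) := Cardinal.mk_le_mk_of_subset this
        _ = Cardinal.lift.{1} κ := by rw [Ordinal.mk_Iio_ordinal, Cardinal.card_ord]
    have hXsup : ∀ B, B < κ.ord → sSup (X B) < κ.ord := by
      intro B hBK
      apply supset hK0 (fun ξ hξ => hξ.1.1)
      rw [hcofK]
      exact hXless B hBK
    set h' : Ordinal → Ordinal := fun B => sSup (X B) + 1 with h'def
    have hh'K : ∀ B, B < κ.ord → h' B < κ.ord := fun B hBK => hsucclt _ (hXsup B hBK)
    have hh'mem : ∀ B, B < κ.ord → ∀ ξ ∈ X B, ξ < h' B := by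
      intro B hBK ξ hξ
      refine lt_of_le_of_lt (le_csSup ⟨κ.ord, fun x hx => hx.1.1.le⟩ hξ) ?_
      have : sSup (X B) < sSup (X B) + 1 := by
        rw [Ordinal.add_one_eq_succ]; exact Order.lt_succ _
      exact this
    set Hf : Ordinal → Ordinal :=
      fun γ => max (γ + 1) (sSup ((fun B => h' B + 1) '' Set.Iio γ)) with hHfdef
    have hHfK : ∀ γ, γ < κ.ord → Hf γ < κ.ord := by
      intro γ hγK
      apply max_lt (hsucclt γ hγK)
      apply supset hK0
      · rintro y ⟨B, hB', rfl⟩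
        exact hsucclt _ (hh'K B (hB'.trans hγK))
      · refine lt_of_le_of_lt Cardinal.mk_image_le ?_
        rw [Ordinal.mk_Iio_ordinal, hcofK]
        exact Cardinal.lift_lt.mpr (Cardinal.lt_ord.mp hγK)
    have hHfgt : ∀ γ, γ < Hf γ := by
      intro γ
      refine lt_of_lt_of_le ?_ (le_max_left _ _)
      rw [Ordinal.add_one_eq_succ]; exact Order.lt_succ γ
    have hHfmono : ∀ γ1 γ2, γ1 ≤ γ2 → γ2 < κ.ord → Hf γ1 ≤ Hf γ2 := by
      intro γ1 γ2 h hγ2K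
      apply max_le
      · exact le_trans (add_le_add_left h 1) (le_max_left _ _)
      · refine le_trans (csSup_le' ?_) (le_max_right _ _)
        rintro y ⟨B, hB', rfl⟩
        refine le_csSup ?_ ⟨B, hB'.trans_le h, rfl⟩
        refine ⟨κ.ord, ?_⟩
        rintro z ⟨B', hB'', rfl⟩
        exact (hsucclt _ (hh'K B' (hB''.trans hγ2K))).le
    have hHfup : ∀ B γ, B < γ → γ < κ.ord → h' B < Hf γ := by
      intro B γ hBγ hγK
      have h1 : h' B + 1 ≤ sSup ((fun B => h' B + 1) '' Set.Iio γ) := by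
        refine le_csSup ⟨κ.ord, ?_⟩ ⟨B, hBγ, rfl⟩
        rintro z ⟨B', hB'', rfl⟩
        exact (hsucclt _ (hh'K B' (hB''.trans hγK))).le
      refine lt_of_lt_of_le (lt_of_lt_of_le ?_ h1) (le_max_right _ _)
      rw [Ordinal.add_one_eq_succ]; exact Order.lt_succ _
    -- build a closure point of cofinality ϖ
    set W := ϖ.ord with hWdef
    have hWK : W < κ.ord := Cardinal.ord_lt_ord.mpr hϖκ
    have hWlim : Order.IsSuccLimit W := Cardinal.isSuccLimit_ord hϖℵ
    have hWcof : W.cof = ϖ := hϖreg.cof_eq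
    set F3 : Ordinal.{0} → (Ordinal → Ordinal) → Set Ordinal :=
      fun j prev => {Hf (sSup ((fun j' => prev j' + 1) '' Set.Iio j))} with hF3def
    have hF3 : ∀ j (f g : Ordinal → Ordinal), (∀ j' < j, f j' = g j') → F3 j f = F3 j g := by
      intro j f g hfg
      have : ((fun j' => f j' + 1) '' Set.Iio j) = ((fun j' => g j' + 1) '' Set.Iio j) :=
        Set.image_congr (fun x hx => by rw [hfg x hx])
      rw [hF3def]
      simp only [this]
    set g : Ordinal → Ordinal := orec F3 with hgdef
    have hgeq : ∀ j, g j = Hf (sSup ((fun j' => g j' + 1) '' Set.Iio j)) := by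
      intro j
      have := orec_mem F3 hF3 j ⟨_, rfl⟩
      simpa [hF3def] using this
    have hgK : ∀ j, j < W → g j < κ.ord := by
      intro j
      induction j using Ordinal.induction with
      | _ j IH =>
        intro hjW
        rw [hgeq j]
        apply hHfK
        apply supset hK0
        · rintro y ⟨j', hj', rfl⟩
          exact hsucclt _ (IH j' hj' (hj'.trans hjW))
        · refine lt_of_le_of_lt Cardinal.mk_image_le ?_
          rw [Ordinal.mk_Iio_ordinal, hcofK]
          exact Cardinal.lift_lt.mpr (Cardinal.lt_ord.mp (hjW.trans hWK))
    have hsj : ∀ j, j < W → sSup ((fun j' => g j' + 1) '' Set.Iio j) < κ.ord := by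
      intro j hjW
      apply supset hK0
      · rintro y ⟨j', hj', rfl⟩
        exact hsucclt _ (hgK j' (hj'.trans hjW))
      · refine lt_of_le_of_lt Cardinal.mk_image_le ?_
        rw [Ordinal.mk_Iio_ordinal, hcofK]
        exact Cardinal.lift_lt.mpr (Cardinal.lt_ord.mp (hjW.trans hWK))
    have hgmono : ∀ ⦃j1 j2⦄, j1 < j2 → j2 < W → g j1 < g j2 := by
      intro j1 j2 h hj2W
      have h1 : g j1 + 1 ≤ sSup ((fun j' => g j' + 1) '' Set.Iio j2) := by
        refine le_csSup ⟨κ.ord, ?_⟩ ⟨j1, h, rfl⟩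
        rintro z ⟨j', hj', rfl⟩
        exact (hsucclt _ (hgK j' (hj'.trans hj2W))).le
      have h2 : g j1 < sSup ((fun j' => g j' + 1) '' Set.Iio j2) := by
        refine lt_of_lt_of_le ?_ h1
        rw [Ordinal.add_one_eq_succ]; exact Order.lt_succ _
      rw [hgeq j2]
      exact h2.trans (hHfgt _)
    set γ := sSup (g '' Set.Iio W) with hγdef
    have hγK : γ < κ.ord := by
      apply supset hK0
      · rintro y ⟨j, hj, rfl⟩
        exact hgK j hj
      · refine lt_of_le_of_lt Cardinal.mk_image_le ?_
        rw [Ordinal.mk_Iio_ordinal, hcofK]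
        exact Cardinal.lift_lt.mpr (Cardinal.lt_ord.mp hWK)
    have hbddg : BddAbove (g '' Set.Iio W) := ⟨κ.ord, by
      rintro y ⟨j, hj, rfl⟩; exact (hgK j hj).le⟩
    have hglt : ∀ j, j < W → g j < γ := by
      intro j hjW
      have hj1 : j + 1 < W := by
        rw [Ordinal.add_one_eq_succ]; exact hWlim.succ_lt hjW
      refine lt_of_lt_of_le (hgmono (by
        rw [Ordinal.add_one_eq_succ]; exact Order.lt_succ j) hj1) ?_
      exact le_csSup hbddg ⟨j + 1, hj1, rfl⟩
    have hgcov : ∀ x, x < γ → ∃ j, j < W ∧ x < g j := by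
      intro x hx
      by_contra hcc
      push_neg at hcc
      have : γ ≤ x := csSup_le' (by rintro y ⟨j, hj, rfl⟩; exact hcc j hj)
      exact absurd (this.trans_lt hx) (lt_irrefl γ)
    have hγcof : γ.cof = ϖ := by
      rw [← hWcof]
      refine cof_of_mono_cofinal g hgmono hglt ?_
      intro x hx
      obtain ⟨j, h1, h2⟩ := hgcov x hx
      exact ⟨j, h1, h2⟩
    -- the contradiction
    have hγS : γ < κ.ord ∧ γ.cof = ϖ := ⟨hγK, hγcof⟩
    obtain ⟨hεγ, -⟩ := hεf γ hγS
    set B := εf γ with hBdef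
    have hBK : B < κ.ord := hεγ.trans hγK
    have hγX : γ ∈ X B := ⟨hγS, le_rfl⟩
    have h1 : γ < h' B := hh'mem B hBK γ hγX
    have h2 : h' B < γ := by
      obtain ⟨j, hjW, hBj⟩ := hgcov B hεγ
      have hj1 : j + 1 < W := by
        rw [Ordinal.add_one_eq_succ]; exact hWlim.succ_lt hjW
      have hA1 : h' B < Hf (g j) := hHfup B (g j) hBj (hgK j hjW)
      have hmemim : g j + 1 ∈ ((fun j' => g j' + 1) '' Set.Iio (j + 1)) :=
        ⟨j, (by rw [Ordinal.add_one_eq_succ]; exact Order.lt_succ j), rfl⟩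
      have hbdd2 : BddAbove ((fun j' => g j' + 1) '' Set.Iio (j + 1)) := ⟨κ.ord, by
        rintro z ⟨j', hj', rfl⟩; exact (hsucclt _ (hgK j' (hj'.trans hj1))).le⟩
      have hstep : g j ≤ g j + 1 := by
        rw [Ordinal.add_one_eq_succ]; exact (Order.lt_succ (g j)).le
      have hgj_le : g j ≤ sSup ((fun j' => g j' + 1) '' Set.Iio (j + 1)) :=
        hstep.trans (le_csSup hbdd2 hmemim)
      have hA2 : Hf (g j) ≤ g (j + 1) := by
        rw [hgeq (j + 1)]
        exact hHfmono _ _ hgj_le (hsj (j + 1) hj1)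
      have hA3 : g (j + 1) ≤ γ := le_csSup hbddg ⟨j + 1, hj1, rfl⟩
      exact lt_of_lt_of_le hA1 (hA2.trans hA3)
    exact absurd (h1.trans h2) (lt_irrefl γ)
  obtain ⟨B, hBK, hXBcard⟩ := hXB
  -- extract the final family
  set Y : Set Ordinal := {ξ | ξ ∈ X B ∧ B < ξ} with hYdef
  have hYX : Y = X B \ {ξ | ξ ∈ X B ∧ ξ ≤ B} := by
    ext ξ
    constructor
    · rintro ⟨h1, h2⟩
      exact ⟨h1, fun hc => absurd h2 (not_lt.mpr hc.2)⟩
    · rintro ⟨h1, h2⟩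
      refine ⟨h1, ?_⟩
      by_contra hc
      push_neg at hc
      exact h2 ⟨h1, hc⟩
  have hYcard : #Y = Cardinal.lift.{1} κ := by
    rw [hYX]
    have hts : {ξ | ξ ∈ X B ∧ ξ ≤ B} ⊆ X B := fun ξ hξ => hξ.1
    have hsum := Cardinal.mk_diff_add_mk hts
    have htle : #{ξ | ξ ∈ X B ∧ ξ ≤ B} < Cardinal.lift.{1} κ := by
      have hsub : {ξ | ξ ∈ X B ∧ ξ ≤ B} ⊆ Set.Iic B := fun ξ hξ => hξ.2
      refine lt_of_le_of_lt (Cardinal.mk_le_mk_of_subset hsub) ?_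
      have hIic : Set.Iic B = Set.Iio (B + 1) := by
        ext x
        simp [Order.lt_add_one_iff]
      rw [hIic, Ordinal.mk_Iio_ordinal]
      exact Cardinal.lift_lt.mpr (Cardinal.lt_ord.mp (hsucclt B hBK))
    have hdle : #(X B \ {ξ | ξ ∈ X B ∧ ξ ≤ B} : Set Ordinal) ≤ Cardinal.lift.{1} κ := by
      have hsub2 : (X B \ {ξ | ξ ∈ X B ∧ ξ ≤ B} : Set Ordinal) ⊆ Set.Iio κ.ord :=
        fun ξ hξ => hξ.1.1.1
      refine le_trans (Cardinal.mk_le_mk_of_subset hsub2) ?_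
      rw [Ordinal.mk_Iio_ordinal, Cardinal.card_ord]
    by_contra hne
    have hlt : #(X B \ {ξ | ξ ∈ X B ∧ ξ ≤ B} : Set Ordinal) < Cardinal.lift.{1} κ :=
      lt_of_le_of_ne hdle hne
    have hcon : #(X B) < Cardinal.lift.{1} κ := by
      rw [← hsum]
      exact Cardinal.add_lt_of_lt hκlift hlt htle
    rw [hXBcard] at hcon
    exact lt_irrefl _ hcon
  have hYK : ∀ ξ ∈ Y, ξ < κ.ord := fun ξ hξ => hξ.1.1.1
  have hYinj : Set.InjOn v Y := by
    intro ξ1 h1 ξ2 h2 heq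
    by_contra hne
    rcases lt_or_gt_of_ne hne with h | h
    · obtain ⟨x, hx⟩ := hvne ξ1 ((h.trans (hYK _ h2)))
      exact lt_irrefl x (hsep2 ξ1 ξ2 h (hYK _ h2) x hx x (heq ▸ hx))
    · obtain ⟨x, hx⟩ := hvne ξ2 ((h.trans (hYK _ h1)))
      exact lt_irrefl x (hsep2 ξ2 ξ1 h (hYK _ h1) x hx x (heq.symm ▸ hx))
  refine ⟨v '' Y, ?_, ?_, ?_⟩
  · rintro a ⟨ξ, hξ, rfl⟩
    exact hv𝒜 ξ (hYK _ hξ)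
  · rw [cardEq, Cardinal.mk_image_eq_of_injOn v _ hYinj, hYcard]
  · rintro a ⟨ξ1, hξ1, rfl⟩ b ⟨ξ2, hξ2, rfl⟩ hsb z hz
    rcases lt_trichotomy ξ1 ξ2 with h | h | h
    · obtain ⟨α, hα, β, hβ, rfl⟩ := hz
      have hgood := (hεf ξ2 hξ2.1.1).2 ξ1 (le_trans hξ2.1.2 hξ1.2.le) h α hα β hβ
      exact hi2 _ hgood
    · exfalso
      subst h
      obtain ⟨x, hx⟩ := hvne ξ1 (hYK _ hξ1)
      exact lt_irrefl x (hsb x hx x hx)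
    · exfalso
      obtain ⟨x, hx⟩ := hvne ξ1 (hYK _ hξ1)
      obtain ⟨y, hy⟩ := hvne ξ2 (hYK _ hξ2)
      exact lt_irrefl _ ((hsb x hx y hy).trans (hsep2 ξ2 ξ1 h (hYK _ hξ1) y hy x hx))
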